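/- For every natural number n, a_n = (n-1)! + ∑_{1 ≤ ℓ ≤ n/2} (-1)^{ℓ-1}·|G_{2ℓ}·s(n,2ℓ)|, where for n = 0 the term (n-1)! is interpreted as absent (a_0 = 0). -/

import Mathlib

/-- The rational sequence `a₀ = 0`, `aₙ = (n/2)·aₙ₋₁ + (n-1)!`. -/
noncomputable def a : ℕ → ℚ
  | 0 => 0
  | n + 1 => ((n + 1 : ℕ) : ℚ) / 2 * a n + (Nat.factorial n : ℚ)

/-- Genocchi numbers, defined by the EGF `2x/(eˣ+1) = ∑ Gₙ xⁿ/n!`. -/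
noncomputable def genocchi (n : ℕ) : ℚ :=
  (Nat.factorial n : ℚ) *
    PowerSeries.coeff (R := ℚ) n (2 * PowerSeries.X * (PowerSeries.exp ℚ + 1)⁻¹)

open Finset Polynomial in
/-- Signed Stirling numbers of the first kind: `s n k` is the coefficient of `X^k`
in `X(X-1)⋯(X-n+1)`. -/
noncomputable def stirlingFst (n k : ℕ) : ℤ :=
  (∏ i ∈ Finset.range n, (Polynomial.X - Polynomial.C (i : ℤ))).coeff k

section GenocchiSeries
open PowerSeries Finset

noncomputable def Gps : ℚ⟦X⟧ := 2 * PowerSeries.X * (PowerSeries.exp ℚ + 1)⁻¹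

lemma genocchi_eq_coeff (n : ℕ) : genocchi n = (Nat.factorial n : ℚ) * coeff (R := ℚ) n Gps := rfl

lemma exp_add_one_ne : constantCoeff (R := ℚ) (exp ℚ + 1) ≠ 0 := by
  simp [PowerSeries.constantCoeff_exp]

lemma exp_add_one_ne' : (exp ℚ + 1 : ℚ⟦X⟧) ≠ 0 := by
  intro h
  exact exp_add_one_ne (by rw [h]; simp)

lemma exp_sub_one_ne' : (exp ℚ - 1 : ℚ⟦X⟧) ≠ 0 := by
  intro h
  have := congrArg (coeff (R := ℚ) 1) h
  simp [PowerSeries.coeff_exp] at this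

lemma Gps_key : Gps * (exp ℚ + 1) = 2 * PowerSeries.X := by
  rw [Gps, mul_assoc, PowerSeries.inv_mul_cancel _ exp_add_one_ne, mul_one]

lemma Gps_eq_bernoulli :
    Gps = 2 * (bernoulliPowerSeries ℚ - rescale 2 (bernoulliPowerSeries ℚ)) := by
  have h1 : bernoulliPowerSeries ℚ * (exp ℚ - 1) = PowerSeries.X :=
    bernoulliPowerSeries_mul_exp_sub_one ℚ
  have h2 : rescale (2:ℚ) (bernoulliPowerSeries ℚ) * (exp ℚ ^ 2 - 1) = PowerSeries.C (R := ℚ) 2 * PowerSeries.X := by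
    have := congrArg (rescale (2:ℚ)) h1
    rw [map_mul, map_sub, map_one, rescale_X] at this
    rw [exp_pow_eq_rescale_exp]
    push_cast
    exact this
  have hC : (PowerSeries.C (R := ℚ) 2 : ℚ⟦X⟧) = 2 := by
    simp [map_ofNat]
  rw [hC] at h2
  have key : (2 * (bernoulliPowerSeries ℚ - rescale 2 (bernoulliPowerSeries ℚ))) * (exp ℚ + 1) = 2 * PowerSeries.X := by
    apply mul_right_cancel₀ exp_sub_one_ne'
    ring_nf
    linear_combination (2 * (exp ℚ + 1)) * h1 - 2 * h2
  apply mul_right_cancel₀ exp_add_one_ne'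
  rw [Gps_key, key]

lemma genocchi_eq (n : ℕ) : genocchi n = 2 * (1 - 2 ^ n) * bernoulli n := by
  rw [genocchi_eq_coeff, Gps_eq_bernoulli]
  have hC : (2 : ℚ⟦X⟧) = PowerSeries.C (R := ℚ) 2 := by simp [map_ofNat]
  rw [hC, PowerSeries.coeff_C_mul, map_sub, coeff_rescale]
  rw [bernoulliPowerSeries, coeff_mk]
  have hf : (Nat.factorial n : ℚ) ≠ 0 := by positivity
  simp only [Algebra.algebraMap_self, RingHom.id_apply] at *
  field_simp

lemma bernoulli_odd_zero {n : ℕ} (h : Odd n) (hlt : 1 < n) : bernoulli n = 0 := by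
  rw [bernoulli_eq_bernoulli'_of_ne_one (by omega), bernoulli'_eq_zero_of_odd h hlt]

lemma bernoulli_sign {k : ℕ} (hk : k ≠ 0) : 0 < (-1 : ℚ) ^ (k + 1) * bernoulli (2 * k) := by
  have h := hasSum_zeta_nat (k := k) hk
  have hpos : (0:ℝ) < (-1 : ℝ) ^ (k + 1) * (2 : ℝ) ^ (2 * k - 1) * Real.pi ^ (2 * k) *
      (bernoulli (2 * k) : ℝ) / (2 * k).factorial :=
    lt_of_lt_of_le one_pos (by simpa using le_hasSum h 1 (fun i _ => by positivity))
  have h2 : (0:ℝ) < (((-1 : ℚ) ^ (k + 1) * bernoulli (2 * k) : ℚ) : ℝ) := by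
    push_cast
    have hc : (0:ℝ) < (2 : ℝ) ^ (2 * k - 1) * Real.pi ^ (2 * k) / (2 * k).factorial := by
      positivity
    have hpos' : (0:ℝ) < ((-1:ℝ) ^ (k + 1) * (bernoulli (2 * k) : ℝ)) *
        ((2 : ℝ) ^ (2 * k - 1) * Real.pi ^ (2 * k) / (2 * k).factorial) := by
      have heq : ((-1:ℝ) ^ (k + 1) * (bernoulli (2 * k) : ℝ)) *
          ((2 : ℝ) ^ (2 * k - 1) * Real.pi ^ (2 * k) / (2 * k).factorial) =
          (-1 : ℝ) ^ (k + 1) * (2 : ℝ) ^ (2 * k - 1) * Real.pi ^ (2 * k) *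
          (bernoulli (2 * k) : ℝ) / (2 * k).factorial := by ring
      rw [heq]; exact hpos
    exact pos_of_mul_pos_left hpos' hc.le
  exact_mod_cast h2

lemma genocchi_zero : genocchi 0 = 0 := by rw [genocchi_eq]; norm_num

lemma genocchi_one : genocchi 1 = 1 := by rw [genocchi_eq, bernoulli_one]; norm_num

lemma genocchi_odd {n : ℕ} (h : Odd n) (hlt : 1 < n) : genocchi n = 0 := by
  rw [genocchi_eq, bernoulli_odd_zero h hlt, mul_zero]

lemma genocchi_sign {k : ℕ} (hk : k ≠ 0) : 0 ≤ (-1 : ℚ) ^ k * genocchi (2 * k) := by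
  rw [genocchi_eq]
  have h := bernoulli_sign hk
  have h2 : (1 : ℚ) ≤ 2 ^ (2 * k) := one_le_pow₀ (by norm_num)
  have key : (-1 : ℚ) ^ k * (2 * (1 - 2 ^ (2 * k)) * bernoulli (2 * k)) =
      2 * (2 ^ (2 * k) - 1) * ((-1 : ℚ) ^ (k + 1) * bernoulli (2 * k)) := by ring
  rw [key]
  exact mul_nonneg (mul_nonneg (by norm_num) (by linarith)) h.le

lemma coeff_Gps (n : ℕ) : coeff (R := ℚ) n Gps = genocchi n / (Nat.factorial n : ℚ) := by
  rw [genocchi_eq_coeff]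
  field_simp [Nat.factorial_ne_zero]

lemma umbral (n : ℕ) :
    (∑ j ∈ range (n + 1), (n.choose j : ℚ) * genocchi j) + genocchi n =
      if n = 1 then 2 else 0 := by
  have h := congrArg (coeff (R := ℚ) n) Gps_key
  rw [PowerSeries.coeff_mul, Finset.Nat.sum_antidiagonal_eq_sum_range_succ_mk] at h
  have hrhs : coeff (R := ℚ) n (2 * PowerSeries.X) = if n = 1 then 2 else 0 := by
    have : (2 : ℚ⟦X⟧) = PowerSeries.C (R := ℚ) 2 := by simp [map_ofNat]
    rw [this, PowerSeries.coeff_C_mul, PowerSeries.coeff_X]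
    split <;> norm_num
  rw [hrhs] at h
  -- split (exp+1) coefficient
  have hsplit : ∀ j ∈ range (n + 1),
      coeff (R := ℚ) j Gps * coeff (R := ℚ) (n - j) (exp ℚ + 1) =
        coeff (R := ℚ) j Gps * coeff (R := ℚ) (n - j) (exp ℚ) +
          coeff (R := ℚ) j Gps * (if n - j = 0 then 1 else 0) := by
    intro j _
    rw [map_add, mul_add, PowerSeries.coeff_one]
  rw [Finset.sum_congr rfl hsplit, Finset.sum_add_distrib] at h
  have h2 : (∑ j ∈ range (n + 1), coeff (R := ℚ) j Gps * (if n - j = 0 then 1 else 0)) =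
      coeff (R := ℚ) n Gps := by
    rw [Finset.sum_eq_single n]
    · simp
    · intro j hj hne
      have : n - j ≠ 0 := by simp at hj; omega
      simp [this]
    · intro hn; simp at hn
  rw [h2] at h
  have h3 := congrArg (fun x => (Nat.factorial n : ℚ) * x) h
  simp only [Finset.mul_sum, mul_add] at h3
  have hterm : ∀ j ∈ range (n + 1),
      (Nat.factorial n : ℚ) * (coeff (R := ℚ) j Gps * coeff (R := ℚ) (n - j) (exp ℚ)) =
        (n.choose j : ℚ) * genocchi j := by
    intro j hj
    have hjn : j ≤ n := by simp at hj; omega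
    rw [coeff_Gps, PowerSeries.coeff_exp, Algebra.algebraMap_self, RingHom.id_apply,
      Nat.cast_choose ℚ hjn]
    have h1 : (Nat.factorial j : ℚ) ≠ 0 := by positivity
    have h2 : (Nat.factorial (n - j) : ℚ) ≠ 0 := by positivity
    field_simp
  rw [Finset.sum_congr rfl hterm] at h3
  rw [coeff_Gps] at h3
  have hfn : (Nat.factorial n : ℚ) ≠ 0 := by positivity
  have h4 : (Nat.factorial n : ℚ) * (genocchi n / (Nat.factorial n : ℚ)) = genocchi n := by
    field_simp
  rw [h4] at h3
  rw [h3]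
  rcases eq_or_ne n 1 with h5 | h5 <;> simp [h5]

end GenocchiSeries

section PolyPart
open Finset Polynomial

noncomputable def Lg : ℚ[X] →ₗ[ℚ] ℚ :=
  Polynomial.lsum fun k => LinearMap.toSpanSingleton ℚ ℚ (genocchi k)

lemma Lg_monomial (n : ℕ) (c : ℚ) : Lg (monomial n c) = c * genocchi n := by
  rw [Lg, Polynomial.lsum_apply, Polynomial.sum_monomial_index]
  · rw [LinearMap.toSpanSingleton_apply, smul_eq_mul]
  · simp

lemma Lg_apply (p : ℚ[X]) : Lg p = p.sum fun k c => c * genocchi k := by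
  simp only [Lg, Polynomial.lsum_apply, LinearMap.toSpanSingleton_apply, smul_eq_mul]

lemma Lg_C_mul (c : ℚ) (p : ℚ[X]) : Lg (C c * p) = c * Lg p := by
  rw [← smul_eq_C_mul, map_smul, smul_eq_mul]

lemma LgA (p : ℚ[X]) : Lg (p.comp (X + 1)) + Lg p = 2 * p.coeff 1 := by
  induction p using Polynomial.induction_on' with
  | add p q hp hq =>
    rw [add_comp, map_add, map_add, coeff_add]
    linarith
  | monomial n c =>
    rw [Lg_monomial, ← C_mul_X_pow_eq_monomial, mul_comp, C_comp, X_pow_comp]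
    rw [add_pow]
    simp only [one_pow, mul_one]
    have hterm : ∀ j ∈ range (n + 1),
        Polynomial.X ^ j * ((n.choose j : ℕ) : ℚ[X]) = monomial j ((n.choose j : ℚ)) := by
      intro j _
      rw [mul_comm, ← C_eq_natCast, C_mul_X_pow_eq_monomial]
    rw [Finset.sum_congr rfl hterm, Finset.mul_sum, map_sum]
    have hterm2 : ∀ j ∈ range (n + 1),
        Lg (C c * monomial j ((n.choose j : ℚ))) = c * ((n.choose j : ℚ) * genocchi j) := by
      intro j _
      rw [Lg_C_mul, Lg_monomial]
    rw [Finset.sum_congr rfl hterm2, ← Finset.mul_sum, coeff_C_mul, coeff_X_pow]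
    have := umbral n
    rcases eq_or_ne n 1 with h | h
    · subst h
      norm_num at this ⊢
      linear_combination c * this
    · rw [if_neg h] at this
      rw [if_neg (fun hh : 1 = n => h hh.symm)]
      linear_combination c * this

noncomputable def Pq (n : ℕ) : ℚ[X] := ∏ i ∈ range n, (X - C (i : ℚ))

lemma Pq_succ (n : ℕ) : Pq (n + 1) = Pq n * (X - C (n : ℚ)) := prod_range_succ _ _

lemma Pq_comp (n : ℕ) : (Pq (n + 1)).comp (X + 1) = Pq n * (X + 1) := by
  rw [Pq, Polynomial.prod_comp]
  simp only [sub_comp, X_comp, C_comp]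
  rw [prod_range_succ']
  simp only [Nat.cast_zero, map_zero, sub_zero]
  congr 1
  apply Finset.prod_congr rfl
  intro i _
  simp only [Nat.cast_add, Nat.cast_one, map_add, map_one]
  ring

lemma Pq_coeff_one (n : ℕ) : (Pq (n + 1)).coeff 1 = (-1) ^ n * (Nat.factorial n : ℚ) := by
  rw [Pq, prod_range_succ']
  simp only [Nat.cast_zero, map_zero, sub_zero]
  rw [Polynomial.coeff_mul_X, coeff_zero_eq_eval_zero, eval_prod]
  simp only [eval_sub, eval_X, eval_C, zero_sub]
  induction n with
  | zero => simp
  | succ m ih => rw [prod_range_succ, ih, Nat.factorial_succ]; push_cast; ring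

noncomputable def fG (n : ℕ) : ℚ := Lg (Pq n)

lemma fG_rec (n : ℕ) :
    2 * fG (n + 1) + ((n : ℚ) + 1) * fG n = 2 * ((-1) ^ n * (Nat.factorial n : ℚ)) := by
  have h := LgA (Pq (n + 1))
  rw [Pq_comp, Pq_coeff_one] at h
  have hx : Pq n * (X + 1) = Pq (n + 1) + C ((n : ℚ) + 1) * Pq n := by
    rw [Pq_succ, map_add, map_one]
    ring
  rw [hx, map_add, Lg_C_mul] at h
  have e1 : fG (n + 1) = Lg (Pq (n + 1)) := rfl
  have e2 : fG n = Lg (Pq n) := rfl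
  rw [e1, e2]
  linarith

lemma fG_zero : fG 0 = 0 := by
  have : Pq 0 = 1 := by simp [Pq]
  rw [fG, this, Lg_apply]
  rw [show (1 : ℚ[X]) = C 1 from (map_one C).symm, Polynomial.sum_C_index] <;>
    simp [genocchi_zero]

lemma a_eq_fG (n : ℕ) : a n = (-1) ^ (n + 1) * fG n := by
  induction n with
  | zero => simp [a, fG_zero]
  | succ m ih =>
    have h := fG_rec m
    have he2 : ((-1 : ℚ)) ^ (m * 2) = 1 := by
      rw [mul_comm, pow_mul]; norm_num
    show ((m + 1 : ℕ) : ℚ) / 2 * a m + (Nat.factorial m : ℚ) = _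
    rw [ih]
    push_cast
    linear_combination (-(-1 : ℚ) ^ m / 2) * h - ((Nat.factorial m : ℚ)) * he2

lemma natDegree_Pq (n : ℕ) : (Pq n).natDegree = n := by
  rw [Pq, Polynomial.natDegree_prod _ _ fun i _ => Polynomial.X_sub_C_ne_zero _]
  have : ∀ i ∈ range n, (X - C (i : ℚ)).natDegree = 1 := fun i _ => natDegree_X_sub_C _
  rw [Finset.sum_congr rfl this, Finset.sum_const, smul_eq_mul, mul_one, card_range]

lemma fG_sum (n : ℕ) : fG n = ∑ k ∈ range (n + 1), (Pq n).coeff k * genocchi k := by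
  rw [fG, Lg_apply]
  exact Polynomial.sum_over_range' (f := fun k c => c * genocchi k) (Pq n) (fun k => zero_mul _) (n + 1) (by rw [natDegree_Pq]; exact Nat.lt_succ_self n)

lemma Pq_cast (n k : ℕ) : ((stirlingFst n k : ℤ) : ℚ) = (Pq n).coeff k := by
  have hmap : Pq n = (∏ i ∈ range n, (X - C (i : ℤ))).map (Int.castRingHom ℚ) := by
    rw [Polynomial.map_prod]
    apply Finset.prod_congr rfl
    intro i _
    rw [Polynomial.map_sub, Polynomial.map_X, Polynomial.map_C]
    simp
  rw [hmap, Polynomial.coeff_map, stirlingFst]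
  simp

lemma stirling_sign (n k : ℕ) : 0 ≤ (-1 : ℤ) ^ (n + k) * stirlingFst n k := by
  induction n generalizing k with
  | zero =>
    rw [stirlingFst]
    simp only [range_zero, prod_empty, coeff_one]
    split <;> simp_all
  | succ n ih =>
    have hs : stirlingFst (n + 1) k =
        (if k = 0 then 0 else stirlingFst n (k - 1)) - n * stirlingFst n k := by
      rw [stirlingFst, prod_range_succ, mul_sub, coeff_sub]
      have h1 : ((∏ i ∈ range n, (X - C (i : ℤ))) * C (n : ℤ)).coeff k =
          (n : ℤ) * stirlingFst n k := by rw [coeff_mul_C, stirlingFst, mul_comm]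
      rw [h1]
      congr 1
      cases k with
      | zero => simp [mul_comm, coeff_X_mul]  -- coeff 0 of p * X
      | succ m => rw [coeff_mul_X]; simp [stirlingFst]
    rw [hs]
    cases k with
    | zero =>
      rw [if_pos rfl, zero_sub]
      have := ih 0
      have hpow : (-1 : ℤ) ^ (n + 1 + 0) = -(-1) ^ (n + 0) := by ring
      rw [hpow]
      have : 0 ≤ (n : ℤ) * ((-1) ^ (n + 0) * stirlingFst n 0) :=
        mul_nonneg (by positivity) this
      nlinarith [this]
    | succ m =>
      rw [if_neg (Nat.succ_ne_zero m), Nat.add_sub_cancel]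
      have h1 := ih m
      have h2 := ih (m + 1)
      have e1 : (-1 : ℤ) ^ (n + 1 + (m + 1)) = (-1) ^ (n + m) := by
        rw [show n + 1 + (m + 1) = (n + m) + 2 from by ring, pow_add]; ring
      have e2 : (-1 : ℤ) ^ (n + (m + 1)) = -(-1) ^ (n + m) := by
        rw [show n + (m + 1) = (n + m) + 1 from by ring, pow_add]; ring
      rw [e1]
      rw [e2] at h2
      have h3 : 0 ≤ (n : ℤ) * (-(-1) ^ (n + m) * stirlingFst n (m + 1)) :=
        mul_nonneg (by positivity) h2
      nlinarith [h1, h3]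

lemma reindex (n : ℕ) (hn : 1 ≤ n) (c : ℕ → ℚ) :
    ∑ k ∈ range (n + 1), c k * genocchi k =
      c 1 * genocchi 1 + ∑ ℓ ∈ Icc 1 (n / 2), c (2 * ℓ) * genocchi (2 * ℓ) := by
  have hsub : insert 1 ((Icc 1 (n / 2)).image (fun ℓ => 2 * ℓ)) ⊆ range (n + 1) := by
    intro x hx
    simp only [mem_insert, mem_image, mem_Icc, mem_range] at hx ⊢
    rcases hx with rfl | ⟨ℓ, ⟨h1, h2⟩, rfl⟩
    · omega
    · have := (Nat.le_div_iff_mul_le (by norm_num : 0 < 2)).mp h2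
      omega
  have hnotmem : 1 ∉ (Icc 1 (n / 2)).image (fun ℓ => 2 * ℓ) := by
    simp only [mem_image, mem_Icc]
    rintro ⟨ℓ, ⟨h1, _⟩, h⟩
    omega
  have hinj : ∀ x ∈ Icc 1 (n / 2), ∀ y ∈ Icc 1 (n / 2), 2 * x = 2 * y → x = y := by
    intro x _ y _ h
    omega
  have hzero : ∀ x ∈ range (n + 1),
      x ∉ insert 1 ((Icc 1 (n / 2)).image (fun ℓ => 2 * ℓ)) → c x * genocchi x = 0 := by
    intro x hx hnot
    simp only [mem_insert, mem_image, mem_Icc, not_or, not_exists] at hnot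
    obtain ⟨h1, h2⟩ := hnot
    simp only [mem_range] at hx
    have hg : genocchi x = 0 := by
      rcases Nat.even_or_odd x with ⟨t, ht⟩ | hodd
      · rcases Nat.eq_zero_or_pos t with rfl | hpos
        · have : x = 0 := by omega
          rw [this]; exact genocchi_zero
        · exfalso
          refine h2 t ⟨⟨hpos, ?_⟩, by omega⟩
          rw [Nat.le_div_iff_mul_le (by norm_num : 0 < 2)]
          omega
      · apply genocchi_odd hodd
        rcases hodd with ⟨t, ht⟩
        omega
    rw [hg, mul_zero]
  rw [← Finset.sum_subset hsub hzero, Finset.sum_insert hnotmem, Finset.sum_image hinj]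

theorem stmt_14 (n : ℕ) :
    a n = (if n = 0 then 0 else (Nat.factorial (n - 1) : ℚ)) +
      ∑ ℓ ∈ Finset.Icc 1 (n / 2),
        (-1 : ℚ) ^ (ℓ - 1) * |genocchi (2 * ℓ) * (stirlingFst n (2 * ℓ) : ℚ)| := by
  rcases n with - | m
  · simp [a]
  set n := m + 1 with hn
  have hterm : ∀ ℓ ∈ Icc 1 (n / 2),
      (-1 : ℚ) ^ (ℓ - 1) * |genocchi (2 * ℓ) * (stirlingFst n (2 * ℓ) : ℚ)| =
        (-1 : ℚ) ^ (n + 1) * ((Pq n).coeff (2 * ℓ) * genocchi (2 * ℓ)) := by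
    intro ℓ hℓ
    simp only [mem_Icc] at hℓ
    obtain ⟨j, rfl⟩ : ∃ j, ℓ = j + 1 := ⟨ℓ - 1, by omega⟩
    have hga : |genocchi (2 * (j + 1))| = (-1 : ℚ) ^ (j + 1) * genocchi (2 * (j + 1)) := by
      have hsign := genocchi_sign (Nat.succ_ne_zero j)
      have h1 : |genocchi (2 * (j + 1))| =
          |(-1 : ℚ) ^ (j + 1) * genocchi (2 * (j + 1))| := by
        rw [abs_mul, abs_pow, abs_neg, abs_one, one_pow, one_mul]
      rw [h1, abs_of_nonneg hsign]
    have hsa : |(stirlingFst n (2 * (j + 1)) : ℚ)| =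
        (-1 : ℚ) ^ n * (stirlingFst n (2 * (j + 1)) : ℚ) := by
      have hsign := stirling_sign n (2 * (j + 1))
      have hcast : (0 : ℚ) ≤ (-1 : ℚ) ^ (n + 2 * (j + 1)) * (stirlingFst n (2 * (j + 1)) : ℚ) := by
        exact_mod_cast Int.cast_nonneg_iff.mpr hsign
      have hpow : (-1 : ℚ) ^ (n + 2 * (j + 1)) = (-1 : ℚ) ^ n := by
        rw [pow_add, pow_mul]; norm_num
      rw [hpow] at hcast
      have h1 : |(stirlingFst n (2 * (j + 1)) : ℚ)| =
          |(-1 : ℚ) ^ n * (stirlingFst n (2 * (j + 1)) : ℚ)| := by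
        rw [abs_mul, abs_pow, abs_neg, abs_one, one_pow, one_mul]
      rw [h1, abs_of_nonneg hcast]
    rw [abs_mul, hga, hsa, ← Pq_cast]
    have he : ((-1 : ℚ)) ^ (j * 2) = 1 := by rw [mul_comm, pow_mul]; norm_num
    simp only [Nat.add_sub_cancel]
    linear_combination (-(-1 : ℚ) ^ n * genocchi (2 * (j + 1)) *
      (stirlingFst n (2 * (j + 1)) : ℚ)) * he
  rw [Finset.sum_congr rfl hterm, ← Finset.mul_sum]
  have hre := reindex n (by omega) (fun k => (Pq n).coeff k)
  rw [← fG_sum] at hre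
  have hfg : ∑ ℓ ∈ Icc 1 (n / 2), (Pq n).coeff (2 * ℓ) * genocchi (2 * ℓ) =
      fG n - (-1 : ℚ) ^ m * (Nat.factorial m : ℚ) := by
    rw [hre, genocchi_one, Pq_coeff_one]
    ring
  rw [hfg, a_eq_fG, if_neg (Nat.succ_ne_zero m)]
  simp only [hn, Nat.add_sub_cancel]
  have he : ((-1 : ℚ)) ^ (m * 2) = 1 := by rw [mul_comm, pow_mul]; norm_num
  linear_combination ((Nat.factorial m : ℚ)) * he

end PolyPart
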